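/- Let 1 < α ≤ 2, 0 ≤ β < α - 1, a < b. Define g(s) = (s-a)^(α-1)(b-s)^(α-1-β) / ((b-a)^(α-1-β) Γ(α)) for s ∈ [a,b]. Then g attains its maximum on [a,b] uniquely at s* = ((α-1)b + (α-1-β)a)/(2α-2-β), and g(s*) = (1/Γ(α)) · ((b-a)(α-1)/(2α-2-β))^(α-1) · ((α-1-β)/(2α-2-β))^(α-1-β). -/

import Mathlib

open Real

private lemma key_amgm (p q x y : ℝ) (hp : 0 < p) (hq : 0 < q)
    (hx : 0 < x) (hy : 0 < y) (hxy : x ≠ y)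
    (hsum : p * x + q * y = p + q) : x ^ p * y ^ q < 1 := by
  have hpq : 0 < p + q := by linarith
  have h1 : (p/(p+q)) • Real.log x + (q/(p+q)) • Real.log y
      < Real.log ((p/(p+q)) • x + (q/(p+q)) • y) :=
    strictConcaveOn_log_Ioi.2 hx hy hxy (div_pos hp hpq) (div_pos hq hpq)
      (by field_simp)
  have h2 : (p/(p+q)) • x + (q/(p+q)) • y = 1 := by
    simp only [smul_eq_mul]
    field_simp
    linarith
  rw [h2, Real.log_one] at h1
  simp only [smul_eq_mul] at h1
  have h3 : p * Real.log x + q * Real.log y < 0 := by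
    have h4 : p / (p+q) * Real.log x + q / (p+q) * Real.log y
        = (p * Real.log x + q * Real.log y) / (p + q) := by ring
    rw [h4] at h1
    by_contra h
    push_neg at h
    have := div_nonneg h hpq.le
    linarith
  calc x ^ p * y ^ q = Real.exp (p * Real.log x + q * Real.log y) := by
        rw [Real.exp_add, Real.rpow_def_of_pos hx, Real.rpow_def_of_pos hy,
          mul_comm (Real.log x) p, mul_comm (Real.log y) q]
    _ < Real.exp 0 := Real.exp_lt_exp.2 h3
    _ = 1 := Real.exp_zero

theorem stmt_4 (α β a b : ℝ) (hα : 1 < α) (hα2 : α ≤ 2) (hβ : 0 ≤ β)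
    (hβα : β < α - 1) (hab : a < b)
    (g : ℝ → ℝ)
    (hg : ∀ s, g s = (s - a) ^ (α - 1) * (b - s) ^ (α - 1 - β) /
      ((b - a) ^ (α - 1 - β) * Real.Gamma α)) :
    let s₀ := ((α - 1) * b + (α - 1 - β) * a) / (2 * α - 2 - β)
    s₀ ∈ Set.Icc a b ∧
      (∀ s ∈ Set.Icc a b, s ≠ s₀ → g s < g s₀) ∧
      g s₀ = (1 / Real.Gamma α) *
        ((b - a) * (α - 1) / (2 * α - 2 - β)) ^ (α - 1) *
        ((α - 1 - β) / (2 * α - 2 - β)) ^ (α - 1 - β) := by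
  intro s₀
  have hp : 0 < α - 1 := by linarith
  have hq : 0 < α - 1 - β := by linarith
  have hD : (0:ℝ) < 2 * α - 2 - β := by linarith
  have hba : 0 < b - a := by linarith
  have hΓ : 0 < Real.Gamma α := Real.Gamma_pos_of_pos (by linarith)
  have hs₀a : s₀ - a = (α - 1) * (b - a) / (2 * α - 2 - β) := by
    show ((α - 1) * b + (α - 1 - β) * a) / (2 * α - 2 - β) - a = _
    rw [eq_div_iff hD.ne', sub_mul, div_mul_cancel₀ _ hD.ne']
    ring
  have hbs₀ : b - s₀ = (α - 1 - β) * (b - a) / (2 * α - 2 - β) := by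
    show b - ((α - 1) * b + (α - 1 - β) * a) / (2 * α - 2 - β) = _
    rw [eq_div_iff hD.ne', sub_mul, div_mul_cancel₀ _ hD.ne']
    ring
  have hs₀a_pos : 0 < s₀ - a := by rw [hs₀a]; positivity
  have hbs₀_pos : 0 < b - s₀ := by rw [hbs₀]; positivity
  have hmem : s₀ ∈ Set.Icc a b := ⟨by linarith, by linarith⟩
  have hdenom : 0 < (b - a) ^ (α - 1 - β) * Real.Gamma α := by positivity
  have hgs₀pos : 0 < (s₀ - a) ^ (α - 1) * (b - s₀) ^ (α - 1 - β) := by positivity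
  refine ⟨hmem, ?_, ?_⟩
  · intro s hs hne
    rw [hg s, hg s₀]
    rw [div_lt_div_iff_of_pos_right hdenom]
    obtain ⟨has, hsb⟩ := hs
    rcases eq_or_lt_of_le has with heq | has'
    · rw [← heq, sub_self, Real.zero_rpow hp.ne', zero_mul]
      exact hgs₀pos
    rcases eq_or_lt_of_le hsb with heq | hsb'
    · rw [heq, sub_self, Real.zero_rpow hq.ne', mul_zero]
      exact hgs₀pos
    set x := (s - a) / (s₀ - a) with hx_def
    set y := (b - s) / (b - s₀) with hy_def
    have hsa : 0 < s - a := by linarith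
    have hbs : 0 < b - s := by linarith
    have hx : 0 < x := div_pos hsa hs₀a_pos
    have hy : 0 < y := div_pos hbs hbs₀_pos
    have hxy : x ≠ y := by
      intro h
      apply hne
      have h' : (s - a) * (b - s₀) = (b - s) * (s₀ - a) :=
        (div_eq_div_iff hs₀a_pos.ne' hbs₀_pos.ne').1 h
      rw [hs₀a, hbs₀] at h'
      have h'' : (s - a) * (α - 1 - β) = (b - s) * (α - 1) := by
        apply mul_right_cancel₀ hba.ne'
        have hDne : (2*α - 2 - β) ≠ 0 := hD.ne'
        field_simp at h'
        rw [div_left_inj' (show (α - 1) * 2 - β ≠ 0 by intro h0; linarith)] at h'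
        linear_combination (b - a) * h'
      show s = ((α - 1) * b + (α - 1 - β) * a) / (2 * α - 2 - β)
      rw [eq_div_iff hD.ne']
      linear_combination h''
    have hsum : (α - 1) * x + (α - 1 - β) * y = (α - 1) + (α - 1 - β) := by
      rw [hx_def, hy_def, hs₀a, hbs₀]
      field_simp
      ring
    have hkey := key_amgm (α - 1) (α - 1 - β) x y hp hq hx hy hxy hsum
    have hxa : s - a = x * (s₀ - a) := by
      rw [hx_def]; field_simp
    have hyb : b - s = y * (b - s₀) := by
      rw [hy_def]; field_simp
    calc (s - a) ^ (α - 1) * (b - s) ^ (α - 1 - β)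
        = (x ^ (α - 1) * y ^ (α - 1 - β)) *
          ((s₀ - a) ^ (α - 1) * (b - s₀) ^ (α - 1 - β)) := by
          rw [hxa, hyb, Real.mul_rpow hx.le hs₀a_pos.le,
            Real.mul_rpow hy.le hbs₀_pos.le]
          ring
      _ < 1 * ((s₀ - a) ^ (α - 1) * (b - s₀) ^ (α - 1 - β)) :=
          mul_lt_mul_of_pos_right hkey hgs₀pos
      _ = _ := one_mul _
  · rw [hg s₀, hs₀a, hbs₀]
    have e3 : (α-1)*(b-a)/(2*α-2-β) = (b-a)*(α-1)/(2*α-2-β) := by ring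
    have e4 : ((α-1-β)*(b-a)/(2*α-2-β) : ℝ) = (b-a) * ((α-1-β)/(2*α-2-β)) := by ring
    rw [e3, e4, Real.mul_rpow hba.le (by positivity)]
    have h5 : (0:ℝ) < (b-a)^(α-1-β) := by positivity
    field_simp
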